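/- Consider the bowtie game G_⋈ under first-price Richman bidding. For every pair of finitely supported budget distributions β (for Max) and γ (for Min) over positive reals, both players' values exist and coincide: MP↓(G_⋈, β, γ) = MP↑(G_⋈, β, γ) = 1/2. -/

import Mathlib

open Filter Finset

noncomputable section

/-- A history of the bowtie game: the list of rounds played so far; each round
records the vertex at which the bidding took place (`true` is the vertex `u`
of weight 1, `false` is the vertex `v` of weight 0), Max's bid and Min's bid. -/
abbrev Hist : Type := List (Bool × ℝ × ℝ)

/-- A pure strategy: given the history and the current vertex, produce a bid and
the vertex to move to upon winning the bidding. -/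
abbrev Strat : Type := Hist → Bool → ℝ × Bool

/-- One bidding round: both players bid; the higher bidder moves the token
(ties are resolved in favor of Min). -/
def step (f g : Strat) (hv : Hist × Bool) : Hist × Bool :=
  (hv.1 ++ [(hv.2, (f hv.1 hv.2).1, (g hv.1 hv.2).1)],
    if (g hv.1 hv.2).1 < (f hv.1 hv.2).1 then (f hv.1 hv.2).2 else (g hv.1 hv.2).2)

/-- The history and current vertex after `n` rounds of the play induced by the
Max strategy `f` and the Min strategy `g` from the initial vertex `v0`. -/
def hist (f g : Strat) (v0 : Bool) : ℕ → Hist × Bool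
  | 0 => ([], v0)
  | n + 1 => step f g (hist f g v0 n)

/-- The vertex visited at time `n` in the play induced by `f` and `g` from `v0`. -/
def vtx (f g : Strat) (v0 : Bool) (n : ℕ) : Bool := (hist f g v0 n).2

/-- The weights of the bowtie game: `w(u) = 1`, `w(v) = 0`. -/
def wt (b : Bool) : ℝ := if b then 1 else 0

/-- The mean-payoff of the play induced by `f` and `g` from `v0`:
`liminf` of the average weight seen in the first `n` rounds. -/
def payoff (f g : Strat) (v0 : Bool) : ℝ :=
  Filter.liminf (fun n : ℕ => (∑ i ∈ Finset.range n, wt (vtx f g v0 i)) / n) Filter.atTop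

/-- In first-price bidding only the winner pays; here we record each player's
total investment (sum of winning bids; ties are won by Min). -/
def maxInv (h : Hist) : ℝ := (h.map fun r => if r.2.2 < r.2.1 then r.2.1 else 0).sum

def minInv (h : Hist) : ℝ := (h.map fun r => if r.2.2 < r.2.1 then 0 else r.2.2).sum

/-- `f ∈ S_Max(B)` under first-price Richman bidding: winning bids are paid to
the opponent, so Max's available budget after `h` is `B - maxInv h + minInv h`;
along any play consistent with `f`, all prescribed bids are nonnegative and do
not exceed this available budget. -/
def richMaxLegal (f : Strat) (B : ℝ) : Prop :=
  ∀ g : Strat, ∀ v0 : Bool, ∀ n : ℕ,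
    0 ≤ (f (hist f g v0 n).1 (hist f g v0 n).2).1 ∧
    (f (hist f g v0 n).1 (hist f g v0 n).2).1
      ≤ B - maxInv (hist f g v0 n).1 + minInv (hist f g v0 n).1

/-- `g ∈ S_Min(C)` under first-price Richman bidding. -/
def richMinLegal (g : Strat) (C : ℝ) : Prop :=
  ∀ f : Strat, ∀ v0 : Bool, ∀ n : ℕ,
    0 ≤ (g (hist f g v0 n).1 (hist f g v0 n).2).1 ∧
    (g (hist f g v0 n).1 (hist f g v0 n).2).1
      ≤ C - minInv (hist f g v0 n).1 + maxInv (hist f g v0 n).1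

/-- A finitely supported budget distribution over positive reals. -/
structure BudgetDist where
  supp : Finset ℝ
  prob : ℝ → ℝ
  supp_pos : ∀ b ∈ supp, 0 < b
  prob_pos : ∀ b ∈ supp, 0 < prob b
  prob_sum : ∑ b ∈ supp, prob b = 1

/-- `MP↓(G_⋈, β, γ) = c` under first-price Richman bidding: for all `δ, ε > 0`,
(i) there is a collection `(f_B ∈ S_Max(B + δ))_{B ∈ supp β}` guaranteeing
expected payoff `≥ c - ε` against every collection `(g_C ∈ S_Min(C))_{C ∈ supp γ}`,
and (ii) for every collection `(f_B ∈ S_Max(B))_B` there is a collection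
`(g_C ∈ S_Min(C + δ))_C` keeping the expected payoff `≤ c + ε`. -/
def RichMPdownIs (v0 : Bool) (β γ : BudgetDist) (c : ℝ) : Prop :=
  ∀ δ > (0 : ℝ), ∀ ε > (0 : ℝ),
    (∃ F : ℝ → Strat, (∀ B ∈ β.supp, richMaxLegal (F B) (B + δ)) ∧
      ∀ G : ℝ → Strat, (∀ C ∈ γ.supp, richMinLegal (G C) C) →
        c - ε ≤ ∑ B ∈ β.supp, ∑ C ∈ γ.supp,
          β.prob B * γ.prob C * payoff (F B) (G C) v0) ∧
    (∀ F : ℝ → Strat, (∀ B ∈ β.supp, richMaxLegal (F B) B) →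
      ∃ G : ℝ → Strat, (∀ C ∈ γ.supp, richMinLegal (G C) (C + δ)) ∧
        ∑ B ∈ β.supp, ∑ C ∈ γ.supp,
          β.prob B * γ.prob C * payoff (F B) (G C) v0 ≤ c + ε)

/-- `MP↑(G_⋈, β, γ) = c` under first-price Richman bidding (dual). -/
def RichMPupIs (v0 : Bool) (β γ : BudgetDist) (c : ℝ) : Prop :=
  ∀ δ > (0 : ℝ), ∀ ε > (0 : ℝ),
    (∃ G : ℝ → Strat, (∀ C ∈ γ.supp, richMinLegal (G C) (C + δ)) ∧
      ∀ F : ℝ → Strat, (∀ B ∈ β.supp, richMaxLegal (F B) B) →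
        ∑ B ∈ β.supp, ∑ C ∈ γ.supp,
          β.prob B * γ.prob C * payoff (F B) (G C) v0 ≤ c + ε) ∧
    (∀ G : ℝ → Strat, (∀ C ∈ γ.supp, richMinLegal (G C) C) →
      ∃ F : ℝ → Strat, (∀ B ∈ β.supp, richMaxLegal (F B) (B + δ)) ∧
        c - ε ≤ ∑ B ∈ β.supp, ∑ C ∈ γ.supp,
          β.prob B * γ.prob C * payoff (F B) (G C) v0)

namespace BT

set_option maxHeartbeats 1000000

/-- Max's strategy: always bid the fraction `l` of the currently available
budget (starting from initial budget `B`) and move to `u`. -/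
def mstrat (l B : ℝ) : Strat := fun h _ => (l * (B - maxInv h + minInv h), true)

/-- Min's strategy: always bid the fraction `l` of the currently available
budget (starting from initial budget `C`) and move to `v`. -/
def nstrat (l C : ℝ) : Strat := fun h _ => (l * (C - minInv h + maxInv h), false)

lemma wt_nonneg (b : Bool) : 0 ≤ wt b := by cases b <;> simp [wt]

lemma wt_le_one (b : Bool) : wt b ≤ 1 := by cases b <;> simp [wt]

lemma maxInv_append (h : Hist) (r : Bool × ℝ × ℝ) :
    maxInv (h ++ [r]) = maxInv h + (if r.2.2 < r.2.1 then r.2.1 else 0) := by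
  simp [maxInv]

lemma minInv_append (h : Hist) (r : Bool × ℝ × ℝ) :
    minInv (h ++ [r]) = minInv h + (if r.2.2 < r.2.1 then 0 else r.2.2) := by
  simp [minInv]

/-- Max's bid at round `n`. -/
def fb (f g : Strat) (v0 : Bool) (n : ℕ) : ℝ :=
  (f (hist f g v0 n).1 (hist f g v0 n).2).1

/-- Min's bid at round `n`. -/
def gb (f g : Strat) (v0 : Bool) (n : ℕ) : ℝ :=
  (g (hist f g v0 n).1 (hist f g v0 n).2).1

lemma hist_succ_fst (f g : Strat) (v0 : Bool) (n : ℕ) : (hist f g v0 (n+1)).1 =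
    (hist f g v0 n).1 ++ [((hist f g v0 n).2, fb f g v0 n, gb f g v0 n)] := rfl

lemma vtx_succ (f g : Strat) (v0 : Bool) (n : ℕ) : vtx f g v0 (n+1) =
    (if gb f g v0 n < fb f g v0 n then (f (hist f g v0 n).1 (hist f g v0 n).2).2
     else (g (hist f g v0 n).1 (hist f g v0 n).2).2) := rfl

/-- Max's available budget after `n` rounds. -/
def avM (f g : Strat) (v0 : Bool) (B : ℝ) (n : ℕ) : ℝ :=
  B - maxInv (hist f g v0 n).1 + minInv (hist f g v0 n).1

/-- Min's available budget after `n` rounds. -/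
def avN (f g : Strat) (v0 : Bool) (C : ℝ) (n : ℕ) : ℝ :=
  C - minInv (hist f g v0 n).1 + maxInv (hist f g v0 n).1

lemma avM_zero (f g : Strat) (v0 : Bool) (B : ℝ) : avM f g v0 B 0 = B := by
  simp [avM, hist, maxInv, minInv]

lemma avN_zero (f g : Strat) (v0 : Bool) (C : ℝ) : avN f g v0 C 0 = C := by
  simp [avN, hist, maxInv, minInv]

lemma avM_succ (f g : Strat) (v0 : Bool) (B : ℝ) (n : ℕ) : avM f g v0 B (n+1) =
    avM f g v0 B n +
      (if gb f g v0 n < fb f g v0 n then -(fb f g v0 n) else gb f g v0 n) := by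
  unfold avM
  rw [hist_succ_fst, maxInv_append, minInv_append]
  by_cases h : gb f g v0 n < fb f g v0 n <;> simp [h] <;> ring

lemma avN_succ (f g : Strat) (v0 : Bool) (C : ℝ) (n : ℕ) : avN f g v0 C (n+1) =
    avN f g v0 C n +
      (if gb f g v0 n < fb f g v0 n then fb f g v0 n else -(gb f g v0 n)) := by
  unfold avN
  rw [hist_succ_fst, maxInv_append, minInv_append]
  by_cases h : gb f g v0 n < fb f g v0 n <;> simp [h] <;> ring

/-- Number of rounds won by Max among the first `n` rounds. -/
def Wm (f g : Strat) (v0 : Bool) (n : ℕ) : ℕ :=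
  ∑ i ∈ Finset.range n, if gb f g v0 i < fb f g v0 i then 1 else 0

lemma Wm_succ (f g : Strat) (v0 : Bool) (n : ℕ) :
    Wm f g v0 (n+1) = Wm f g v0 n + (if gb f g v0 n < fb f g v0 n then 1 else 0) :=
  Finset.sum_range_succ _ _

lemma Wm_le (f g : Strat) (v0 : Bool) (n : ℕ) : Wm f g v0 n ≤ n := by
  induction n with
  | zero => simp [Wm]
  | succ n ih =>
    rw [Wm_succ]
    have : (if gb f g v0 n < fb f g v0 n then 1 else 0) ≤ 1 := by split <;> simp
    omega

lemma fb_mstrat (l B : ℝ) (g : Strat) (v0 : Bool) (n : ℕ) :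
    fb (mstrat l B) g v0 n = l * avM (mstrat l B) g v0 B n := rfl

lemma gb_nstrat (l C : ℝ) (f : Strat) (v0 : Bool) (n : ℕ) :
    gb f (nstrat l C) v0 n = l * avN f (nstrat l C) v0 C n := rfl

lemma avM_pos (l B : ℝ) (hl0 : 0 < l) (hl1 : l < 1) (hB : 0 < B)
    (g : Strat) (v0 : Bool) (n : ℕ) : 0 < avM (mstrat l B) g v0 B n := by
  induction n with
  | zero => simpa [avM_zero] using hB
  | succ n ih =>
    rw [avM_succ]
    by_cases hw : gb (mstrat l B) g v0 n < fb (mstrat l B) g v0 n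
    · rw [if_pos hw, fb_mstrat]; nlinarith
    · rw [if_neg hw]
      have h2 : fb (mstrat l B) g v0 n ≤ gb (mstrat l B) g v0 n := not_lt.mp hw
      rw [fb_mstrat] at h2
      nlinarith

lemma avN_pos (l C : ℝ) (hl0 : 0 < l) (hl1 : l < 1) (hC : 0 < C)
    (f : Strat) (v0 : Bool) (n : ℕ) : 0 < avN f (nstrat l C) v0 C n := by
  induction n with
  | zero => simpa [avN_zero] using hC
  | succ n ih =>
    rw [avN_succ]
    by_cases hw : gb f (nstrat l C) v0 n < fb f (nstrat l C) v0 n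
    · rw [if_pos hw]
      have h2 : gb f (nstrat l C) v0 n < fb f (nstrat l C) v0 n := hw
      rw [gb_nstrat] at h2
      nlinarith
    · rw [if_neg hw, gb_nstrat]; nlinarith

lemma mstrat_legal (l B : ℝ) (hl0 : 0 < l) (hl1 : l < 1) (hB : 0 < B) :
    richMaxLegal (mstrat l B) B := by
  intro g v0 n
  have h := avM_pos l B hl0 hl1 hB g v0 n
  constructor
  · show (0:ℝ) ≤ l * avM (mstrat l B) g v0 B n
    positivity
  · show l * avM (mstrat l B) g v0 B n ≤ avM (mstrat l B) g v0 B n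
    nlinarith

lemma nstrat_legal (l C : ℝ) (hl0 : 0 < l) (hl1 : l < 1) (hC : 0 < C) :
    richMinLegal (nstrat l C) C := by
  intro f v0 n
  have h := avN_pos l C hl0 hl1 hC f v0 n
  constructor
  · show (0:ℝ) ≤ l * avN f (nstrat l C) v0 C n
    positivity
  · show l * avN f (nstrat l C) v0 C n ≤ avN f (nstrat l C) v0 C n
    nlinarith

lemma avM_lower (l B : ℝ) (hl0 : 0 < l) (hl1 : l < 1) (hB : 0 < B)
    (g : Strat) (v0 : Bool) (n : ℕ) :
    B * (1-l) ^ Wm (mstrat l B) g v0 n * (1+l) ^ (n - Wm (mstrat l B) g v0 n)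
      ≤ avM (mstrat l B) g v0 B n := by
  have hx : (0:ℝ) < 1 - l := by linarith
  have hy : (0:ℝ) < 1 + l := by linarith
  induction n with
  | zero => simp [Wm, avM_zero]
  | succ n ih =>
    have hWle : Wm (mstrat l B) g v0 n ≤ n := Wm_le _ _ _ n
    have hav : 0 < avM (mstrat l B) g v0 B n := avM_pos l B hl0 hl1 hB g v0 n
    rw [avM_succ, Wm_succ]
    by_cases hw : gb (mstrat l B) g v0 n < fb (mstrat l B) g v0 n
    · rw [if_pos hw, if_pos hw, fb_mstrat]
      have hsub : n + 1 - (Wm (mstrat l B) g v0 n + 1) = n - Wm (mstrat l B) g v0 n := by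
        omega
      rw [hsub]
      have h1 : B * (1-l) ^ (Wm (mstrat l B) g v0 n + 1)
            * (1+l) ^ (n - Wm (mstrat l B) g v0 n)
          = (1-l) * (B * (1-l) ^ Wm (mstrat l B) g v0 n
            * (1+l) ^ (n - Wm (mstrat l B) g v0 n)) := by ring
      have h2 : avM (mstrat l B) g v0 B n + -(l * avM (mstrat l B) g v0 B n)
          = (1-l) * avM (mstrat l B) g v0 B n := by ring
      rw [h1, h2]
      exact mul_le_mul_of_nonneg_left ih hx.le
    · rw [if_neg hw, if_neg hw]
      have hgb : l * avM (mstrat l B) g v0 B n ≤ gb (mstrat l B) g v0 n := by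
        have := not_lt.mp hw
        rwa [fb_mstrat] at this
      have hsub : n + 1 - (Wm (mstrat l B) g v0 n + 0) = (n - Wm (mstrat l B) g v0 n) + 1 := by
        omega
      rw [add_zero] at hsub ⊢
      rw [hsub]
      have h1 : B * (1-l) ^ Wm (mstrat l B) g v0 n
            * (1+l) ^ ((n - Wm (mstrat l B) g v0 n) + 1)
          = (1+l) * (B * (1-l) ^ Wm (mstrat l B) g v0 n
            * (1+l) ^ (n - Wm (mstrat l B) g v0 n)) := by ring
      rw [h1]
      have h2 : (1+l) * (B * (1-l) ^ Wm (mstrat l B) g v0 n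
            * (1+l) ^ (n - Wm (mstrat l B) g v0 n))
          ≤ (1+l) * avM (mstrat l B) g v0 B n := mul_le_mul_of_nonneg_left ih hy.le
      nlinarith

lemma avN_lower (l C : ℝ) (hl0 : 0 < l) (hl1 : l < 1) (hC : 0 < C)
    (f : Strat) (v0 : Bool) (n : ℕ) :
    C * (1-l) ^ (n - Wm f (nstrat l C) v0 n) * (1+l) ^ Wm f (nstrat l C) v0 n
      ≤ avN f (nstrat l C) v0 C n := by
  have hx : (0:ℝ) < 1 - l := by linarith
  have hy : (0:ℝ) < 1 + l := by linarith
  induction n with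
  | zero => simp [Wm, avN_zero]
  | succ n ih =>
    have hWle : Wm f (nstrat l C) v0 n ≤ n := Wm_le _ _ _ n
    have hav : 0 < avN f (nstrat l C) v0 C n := avN_pos l C hl0 hl1 hC f v0 n
    rw [avN_succ, Wm_succ]
    by_cases hw : gb f (nstrat l C) v0 n < fb f (nstrat l C) v0 n
    · rw [if_pos hw, if_pos hw]
      have hfb : l * avN f (nstrat l C) v0 C n ≤ fb f (nstrat l C) v0 n := by
        have h2 := hw
        rw [gb_nstrat] at h2
        linarith
      have hsub : n + 1 - (Wm f (nstrat l C) v0 n + 1) = n - Wm f (nstrat l C) v0 n := by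
        omega
      rw [hsub]
      have h1 : C * (1-l) ^ (n - Wm f (nstrat l C) v0 n)
            * (1+l) ^ (Wm f (nstrat l C) v0 n + 1)
          = (1+l) * (C * (1-l) ^ (n - Wm f (nstrat l C) v0 n)
            * (1+l) ^ Wm f (nstrat l C) v0 n) := by ring
      rw [h1]
      have h2 : (1+l) * (C * (1-l) ^ (n - Wm f (nstrat l C) v0 n)
            * (1+l) ^ Wm f (nstrat l C) v0 n)
          ≤ (1+l) * avN f (nstrat l C) v0 C n := mul_le_mul_of_nonneg_left ih hy.le
      nlinarith
    · rw [if_neg hw, if_neg hw, gb_nstrat, add_zero]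
      have hsub : n + 1 - Wm f (nstrat l C) v0 n = (n - Wm f (nstrat l C) v0 n) + 1 := by
        omega
      rw [hsub]
      have h1 : C * (1-l) ^ ((n - Wm f (nstrat l C) v0 n) + 1)
            * (1+l) ^ Wm f (nstrat l C) v0 n
          = (1-l) * (C * (1-l) ^ (n - Wm f (nstrat l C) v0 n)
            * (1+l) ^ Wm f (nstrat l C) v0 n) := by ring
      have h2 : avN f (nstrat l C) v0 C n + -(l * avN f (nstrat l C) v0 C n)
          = (1-l) * avN f (nstrat l C) v0 C n := by ring
      rw [h1, h2]
      exact mul_le_mul_of_nonneg_left ih hx.le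

lemma avM_upper (l B C : ℝ) (g : Strat) (v0 : Bool) (hg : richMinLegal g C) (n : ℕ) :
    avM (mstrat l B) g v0 B n ≤ B + C := by
  have h1 := (hg (mstrat l B) v0 n).1
  have h2 := (hg (mstrat l B) v0 n).2
  unfold avM
  linarith

lemma avN_upper (l B C : ℝ) (f : Strat) (v0 : Bool) (hf : richMaxLegal f B) (n : ℕ) :
    avN f (nstrat l C) v0 C n ≤ C + B := by
  have h1 := (hf (nstrat l C) v0 n).1
  have h2 := (hf (nstrat l C) v0 n).2
  unfold avN
  linarith

lemma log_lb (l : ℝ) (h0 : 0 < l) (h1 : l ≤ 1) : l / 2 ≤ Real.log (1 + l) := by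
  have hy : (0:ℝ) < 1 + l := by linarith
  have h := Real.log_le_sub_one_of_pos (inv_pos.mpr hy)
  rw [Real.log_inv] at h
  have h3 : (1+l)⁻¹ ≤ 1 - l/2 := by
    rw [inv_eq_one_div, div_le_iff₀ hy]
    nlinarith
  linarith

lemma log_ub (x : ℝ) (h0 : 0 ≤ x) (h1 : x ≤ 1/2) : -(2*x) ≤ Real.log (1 - x) := by
  have hx : (0:ℝ) < 1 - x := by linarith
  have he : Real.exp (-(2*x)) ≤ 1 - x := by
    rw [Real.exp_neg]
    have h2 : 1 + 2*x ≤ Real.exp (2*x) := by linarith [Real.add_one_le_exp (2*x)]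
    have h3 : (0:ℝ) < Real.exp (2*x) := Real.exp_pos _
    calc (Real.exp (2*x))⁻¹ = 1 / Real.exp (2*x) := by rw [one_div]
      _ ≤ 1 - x := by rw [div_le_iff₀ h3]; nlinarith
  calc -(2*x) = Real.log (Real.exp (-(2*x))) := (Real.log_exp _).symm
    _ ≤ Real.log (1-x) := Real.log_le_log (Real.exp_pos _) he

/-- Key counting bound: if the budget multiplicative invariant is bounded by
the total money, the player has won almost half of the rounds. -/
lemma count_bound (ε B C : ℝ) (hε : 0 < ε) (hB : 0 < B) (hC : 0 ≤ C)
    (n W : ℕ) (hWn : W ≤ n)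
    (h : B * (1 - min ε 1 / 4) ^ W * (1 + min ε 1 / 4) ^ (n - W) ≤ B + C) :
    (n:ℝ) - 2*W ≤ Real.log ((B+C)/B) / Real.log (1 + min ε 1 / 4) + ε * n := by
  set l := min ε 1 / 4 with hldef
  have hminpos : 0 < min ε 1 := lt_min hε one_pos
  have hmin1 : min ε 1 ≤ 1 := min_le_right _ _
  have hminε : min ε 1 ≤ ε := min_le_left _ _
  have hl0 : 0 < l := by rw [hldef]; linarith
  have hl1 : l ≤ 1/4 := by rw [hldef]; linarith
  have h4l : 4 * l ≤ ε := by rw [hldef]; linarith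
  have hx : (0:ℝ) < 1 - l := by linarith
  have hy : (0:ℝ) < 1 + l := by linarith
  have hL : l/2 ≤ Real.log (1+l) := log_lb l hl0 (by linarith)
  have hLpos : 0 < Real.log (1+l) := lt_of_lt_of_le (by linarith) hL
  have hR1 : (1-l)^W * (1+l)^(n-W) ≤ (B+C)/B := by
    rw [le_div_iff₀ hB]
    linear_combination h
  have hlog := Real.log_le_log (mul_pos (pow_pos hx W) (pow_pos hy (n-W))) hR1
  rw [Real.log_mul (pow_pos hx W).ne' (pow_pos hy (n-W)).ne', Real.log_pow,
    Real.log_pow] at hlog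
  have hcast : ((n - W : ℕ) : ℝ) = (n:ℝ) - (W:ℝ) := Nat.cast_sub hWn
  rw [hcast] at hlog
  have hWr : (W:ℝ) ≤ (n:ℝ) := by exact_mod_cast hWn
  have hl2 : l^2 ≤ 1/2 := by nlinarith
  have hlogq : -(2*l^2) ≤ Real.log (1 - l^2) := log_ub (l^2) (by positivity) hl2
  have hqnonpos : Real.log (1 - l^2) ≤ 0 := Real.log_nonpos (by nlinarith) (by nlinarith)
  have hmul : Real.log (1-l) + Real.log (1+l) = Real.log (1 - l^2) := by
    rw [← Real.log_mul hx.ne' hy.ne']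
    ring_nf
  have hprod : (W:ℝ) * (-(Real.log (1 - l^2))) ≤ (n:ℝ) * (2*l^2) :=
    mul_le_mul hWr (by linarith) (by linarith) (Nat.cast_nonneg n)
  have hWmul : (W:ℝ) * Real.log (1-l) + (W:ℝ) * Real.log (1+l)
      = (W:ℝ) * Real.log (1-l^2) := by rw [← hmul]; ring
  have key : ((n:ℝ) - 2*W) * Real.log (1+l)
      ≤ Real.log ((B+C)/B) + (n:ℝ) * (2*l^2) := by
    calc ((n:ℝ) - 2*W) * Real.log (1+l)
        = ((W:ℝ) * Real.log (1-l) + ((n:ℝ)-W) * Real.log (1+l))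
          - ((W:ℝ) * Real.log (1-l) + (W:ℝ) * Real.log (1+l)) := by ring
      _ ≤ Real.log ((B+C)/B) - (W:ℝ) * Real.log (1-l^2) := by
          rw [hWmul]; linarith [hlog]
      _ ≤ Real.log ((B+C)/B) + (n:ℝ) * (2*l^2) := by linarith [hprod]
  have hdiv : (n:ℝ) - 2*W ≤ (Real.log ((B+C)/B) + (n:ℝ)*(2*l^2)) / Real.log (1+l) :=
    (le_div_iff₀ hLpos).mpr key
  have hb2 : (n:ℝ)*(2*l^2) / Real.log (1+l) ≤ (n:ℝ) * (4*l) := by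
    rw [div_le_iff₀ hLpos]
    have hstep := mul_le_mul_of_nonneg_left hL (by positivity : (0:ℝ) ≤ (n:ℝ)*(4*l))
    calc (n:ℝ)*(2*l^2) = (n:ℝ)*(4*l)*(l/2) := by ring
      _ ≤ (n:ℝ)*(4*l) * Real.log (1+l) := hstep
  have hb4 : (n:ℝ)*(4*l) ≤ ε * (n:ℝ) := by
    have hn0 : (0:ℝ) ≤ (n:ℝ) := Nat.cast_nonneg n
    nlinarith [hn0, h4l]
  calc (n:ℝ) - 2*W ≤ (Real.log ((B+C)/B) + (n:ℝ)*(2*l^2)) / Real.log (1+l) := hdiv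
    _ = Real.log ((B+C)/B) / Real.log (1+l) + (n:ℝ)*(2*l^2) / Real.log (1+l) :=
        add_div _ _ _
    _ ≤ Real.log ((B+C)/B) / Real.log (1+l) + (n:ℝ)*(4*l) := by linarith
    _ ≤ Real.log ((B+C)/B) / Real.log (1+l) + ε * n := by linarith

lemma sum_wt_ge (l B : ℝ) (g : Strat) (v0 : Bool) (n : ℕ) :
    (Wm (mstrat l B) g v0 n : ℝ)
      ≤ ∑ i ∈ Finset.range (n+1), wt (vtx (mstrat l B) g v0 i) := by
  induction n with
  | zero => simpa [Wm] using wt_nonneg (vtx (mstrat l B) g v0 0)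
  | succ n ih =>
    rw [Finset.sum_range_succ, Wm_succ]
    push_cast
    have hwt : (if gb (mstrat l B) g v0 n < fb (mstrat l B) g v0 n then (1:ℝ) else 0)
        ≤ wt (vtx (mstrat l B) g v0 (n+1)) := by
      by_cases hw : gb (mstrat l B) g v0 n < fb (mstrat l B) g v0 n
      · rw [if_pos hw, vtx_succ, if_pos hw]
        simp [mstrat, wt]
      · rw [if_neg hw]
        exact wt_nonneg _
    linarith

lemma sum_wt_le (l C : ℝ) (f : Strat) (v0 : Bool) (n : ℕ) :
    ∑ i ∈ Finset.range (n+1), wt (vtx f (nstrat l C) v0 i)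
      ≤ 1 + (Wm f (nstrat l C) v0 n : ℝ) := by
  induction n with
  | zero => simpa [Wm] using wt_le_one (vtx f (nstrat l C) v0 0)
  | succ n ih =>
    rw [Finset.sum_range_succ, Wm_succ]
    push_cast
    have hwt : wt (vtx f (nstrat l C) v0 (n+1))
        ≤ (if gb f (nstrat l C) v0 n < fb f (nstrat l C) v0 n then (1:ℝ) else 0) := by
      by_cases hw : gb f (nstrat l C) v0 n < fb f (nstrat l C) v0 n
      · rw [if_pos hw]
        exact wt_le_one _
      · rw [if_neg hw, vtx_succ, if_neg hw]
        simp [nstrat, wt]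
    linarith

lemma payoff_ge (ε B C : ℝ) (hε : 0 < ε) (hB : 0 < B) (hC : 0 < C)
    (g : Strat) (hg : richMinLegal g C) (v0 : Bool) :
    1/2 - ε ≤ payoff (mstrat (min ε 1 / 4) B) g v0 := by
  set l := min ε 1 / 4 with hldef
  have hminpos : 0 < min ε 1 := lt_min hε one_pos
  have hmin1 : min ε 1 ≤ 1 := min_le_right _ _
  have hl0 : 0 < l := by rw [hldef]; linarith
  have hl1 : l < 1 := by rw [hldef]; linarith
  set A := Real.log ((B+C)/B) / Real.log (1 + l) with hA
  have hcnt : ∀ n : ℕ, (n:ℝ) - 2 * (Wm (mstrat l B) g v0 n) ≤ A + ε * n := by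
    intro n
    exact count_bound ε B C hε hB hC.le n _ (Wm_le _ _ _ n)
      (le_trans (avM_lower l B hl0 hl1 hB g v0 n) (avM_upper l B C g v0 hg n))
  unfold payoff
  apply Filter.le_liminf_of_le
  · apply Filter.isCoboundedUnder_ge_of_eventually_le (x := 1) atTop
    apply Filter.Eventually.of_forall
    intro n
    rcases Nat.eq_zero_or_pos n with h0 | h0
    · simp [h0]
    · rw [div_le_one (by exact_mod_cast h0 : (0:ℝ) < n)]
      calc ∑ i ∈ Finset.range n, wt (vtx (mstrat l B) g v0 i)
          ≤ ∑ _i ∈ Finset.range n, (1:ℝ) := Finset.sum_le_sum (fun i _ => wt_le_one _)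
        _ = n := by simp
  · obtain ⟨N, hNge⟩ := exists_nat_ge ((A+1)/ε)
    rw [Filter.eventually_atTop]
    refine ⟨N + 1, ?_⟩
    intro m hm
    obtain ⟨k, rfl⟩ : ∃ k, m = k + 1 := ⟨m - 1, by omega⟩
    have hk2 : (A+1)/ε ≤ (k:ℝ) + 1 := by
      have h5 : (N:ℝ) ≤ (k:ℝ) + 1 := by exact_mod_cast (by omega : N ≤ k + 1)
      linarith
    have hAk : A + 1 ≤ ε * ((k:ℝ)+1) := by
      rw [div_le_iff₀ hε] at hk2
      linarith
    have hS := sum_wt_ge l B g v0 k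
    have hc := hcnt k
    have hm0 : (0:ℝ) < ((k:ℕ):ℝ) + 1 := by positivity
    have hm0' : (0:ℝ) < (((k+1:ℕ)):ℝ) := by push_cast; linarith
    rw [le_div_iff₀ hm0']
    push_cast
    nlinarith

lemma payoff_le (ε B C : ℝ) (hε : 0 < ε) (hB : 0 < B) (hC : 0 < C)
    (f : Strat) (hf : richMaxLegal f B) (v0 : Bool) :
    payoff f (nstrat (min ε 1 / 4) C) v0 ≤ 1/2 + ε := by
  set l := min ε 1 / 4 with hldef
  have hminpos : 0 < min ε 1 := lt_min hε one_pos
  have hmin1 : min ε 1 ≤ 1 := min_le_right _ _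
  have hl0 : 0 < l := by rw [hldef]; linarith
  have hl1 : l < 1 := by rw [hldef]; linarith
  set A := Real.log ((C+B)/C) / Real.log (1 + l) with hA
  have hcnt : ∀ n : ℕ, 2 * ((Wm f (nstrat l C) v0 n : ℝ)) - n ≤ A + ε * n := by
    intro n
    have hWle : Wm f (nstrat l C) v0 n ≤ n := Wm_le _ _ _ n
    have hsub : n - (n - Wm f (nstrat l C) v0 n) = Wm f (nstrat l C) v0 n := by omega
    have h := count_bound ε C B hε hC hB.le n (n - Wm f (nstrat l C) v0 n)
      (Nat.sub_le _ _)
      (by rw [hsub]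
          exact le_trans (avN_lower l C hl0 hl1 hC f v0 n) (avN_upper l B C f v0 hf n))
    have hcast : ((n - Wm f (nstrat l C) v0 n : ℕ) : ℝ)
        = (n:ℝ) - (Wm f (nstrat l C) v0 n : ℝ) := Nat.cast_sub hWle
    rw [hcast] at h
    linarith
  unfold payoff
  apply Filter.liminf_le_of_le
  · refine ⟨0, ?_⟩
    rw [Filter.eventually_map]
    apply Filter.Eventually.of_forall
    intro n
    have : (0:ℝ) ≤ ∑ i ∈ Finset.range n, wt (vtx f (nstrat l C) v0 i) :=
      Finset.sum_nonneg (fun i _ => wt_nonneg _)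
    positivity
  · intro b hb
    obtain ⟨N, hNge⟩ := exists_nat_ge ((A+1)/ε)
    have hev : ∀ᶠ m in atTop,
        (∑ i ∈ Finset.range m, wt (vtx f (nstrat l C) v0 i)) / m ≤ 1/2 + ε := by
      rw [Filter.eventually_atTop]
      refine ⟨N + 1, ?_⟩
      intro m hm
      obtain ⟨k, rfl⟩ : ∃ k, m = k + 1 := ⟨m - 1, by omega⟩
      have hk2 : (A+1)/ε ≤ (k:ℝ) + 1 := by
        have h5 : (N:ℝ) ≤ (k:ℝ) + 1 := by exact_mod_cast (by omega : N ≤ k + 1)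
        linarith
      have hAk : A + 1 ≤ ε * ((k:ℝ)+1) := by
        rw [div_le_iff₀ hε] at hk2
        linarith
      have hS := sum_wt_le l C f v0 k
      have hc := hcnt k
      have hm0' : (0:ℝ) < (((k+1:ℕ)):ℝ) := by push_cast; positivity
      rw [div_le_iff₀ hm0']
      push_cast
      nlinarith
    obtain ⟨n, hb1, hb2⟩ := (hb.and hev).exists
    linarith

lemma exp_ge (β γ : BudgetDist) (x : ℝ → ℝ → ℝ) (a : ℝ)
    (hx : ∀ B ∈ β.supp, ∀ C ∈ γ.supp, a ≤ x B C) :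
    a ≤ ∑ B ∈ β.supp, ∑ C ∈ γ.supp, β.prob B * γ.prob C * x B C := by
  have h1 : ∀ B ∈ β.supp,
      β.prob B * a ≤ ∑ C ∈ γ.supp, β.prob B * γ.prob C * x B C := by
    intro B hB
    have he : β.prob B * a = ∑ C ∈ γ.supp, β.prob B * γ.prob C * a := by
      calc β.prob B * a = β.prob B * ((∑ C ∈ γ.supp, γ.prob C) * a) := by
            rw [γ.prob_sum]; ring
        _ = ∑ C ∈ γ.supp, β.prob B * γ.prob C * a := by
            rw [Finset.sum_mul, Finset.mul_sum]
            exact Finset.sum_congr rfl (fun C _ => by ring)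
    rw [he]
    apply Finset.sum_le_sum
    intro C hC
    exact mul_le_mul_of_nonneg_left (hx B hB C hC)
      (mul_nonneg (β.prob_pos B hB).le (γ.prob_pos C hC).le)
  calc a = ∑ B ∈ β.supp, β.prob B * a := by
        rw [← Finset.sum_mul, β.prob_sum, one_mul]
    _ ≤ _ := Finset.sum_le_sum h1

lemma exp_le (β γ : BudgetDist) (x : ℝ → ℝ → ℝ) (a : ℝ)
    (hx : ∀ B ∈ β.supp, ∀ C ∈ γ.supp, x B C ≤ a) :
    ∑ B ∈ β.supp, ∑ C ∈ γ.supp, β.prob B * γ.prob C * x B C ≤ a := by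
  have h1 : ∀ B ∈ β.supp,
      ∑ C ∈ γ.supp, β.prob B * γ.prob C * x B C ≤ β.prob B * a := by
    intro B hB
    have he : β.prob B * a = ∑ C ∈ γ.supp, β.prob B * γ.prob C * a := by
      calc β.prob B * a = β.prob B * ((∑ C ∈ γ.supp, γ.prob C) * a) := by
            rw [γ.prob_sum]; ring
        _ = ∑ C ∈ γ.supp, β.prob B * γ.prob C * a := by
            rw [Finset.sum_mul, Finset.mul_sum]
            exact Finset.sum_congr rfl (fun C _ => by ring)
    rw [he]
    apply Finset.sum_le_sum
    intro C hC
    exact mul_le_mul_of_nonneg_left (hx B hB C hC)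
      (mul_nonneg (β.prob_pos B hB).le (γ.prob_pos C hC).le)
  calc ∑ B ∈ β.supp, ∑ C ∈ γ.supp, β.prob B * γ.prob C * x B C
      ≤ ∑ B ∈ β.supp, β.prob B * a := Finset.sum_le_sum h1
    _ = a := by rw [← Finset.sum_mul, β.prob_sum, one_mul]

lemma lpos {ε : ℝ} (hε : 0 < ε) : 0 < min ε 1 / 4 := by
  have : 0 < min ε 1 := lt_min hε one_pos
  linarith

lemma llt1 {ε : ℝ} (hε : 0 < ε) : min ε 1 / 4 < 1 := by
  have : min ε 1 ≤ 1 := min_le_right _ _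
  linarith

end BT

/-- in the bowtie game under first-price Richman bidding,
for all finitely supported budget distributions `β` (for Max) and `γ` (for
Min), both players' values exist and coincide:
`MP↓(G_⋈, β, γ) = MP↑(G_⋈, β, γ) = 1/2`. -/
theorem stmt_1 (v0 : Bool) (β γ : BudgetDist) :
    RichMPdownIs v0 β γ (1 / 2) ∧ RichMPupIs v0 β γ (1 / 2) := by
  constructor
  · intro δ hδ ε hε
    constructor
    · refine ⟨fun B => BT.mstrat (min ε 1 / 4) (B + δ), ?_, ?_⟩
      · intro B hB
        exact BT.mstrat_legal _ _ (BT.lpos hε) (BT.llt1 hε)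
          (by linarith [β.supp_pos B hB])
      · intro G hG
        refine le_trans (le_of_eq (by norm_num)) (BT.exp_ge β γ _ (1/2 - ε) ?_)
        intro B hB C hC
        exact BT.payoff_ge ε (B + δ) C hε (by linarith [β.supp_pos B hB])
          (γ.supp_pos C hC) (G C) (hG C hC) v0
    · intro F hF
      refine ⟨fun C => BT.nstrat (min ε 1 / 4) (C + δ), ?_, ?_⟩
      · intro C hC
        exact BT.nstrat_legal _ _ (BT.lpos hε) (BT.llt1 hε)
          (by linarith [γ.supp_pos C hC])
      · refine le_trans (BT.exp_le β γ _ (1/2 + ε) ?_) (le_of_eq (by norm_num))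
        intro B hB C hC
        exact BT.payoff_le ε B (C + δ) hε (β.supp_pos B hB)
          (by linarith [γ.supp_pos C hC]) (F B) (hF B hB) v0
  · intro δ hδ ε hε
    constructor
    · refine ⟨fun C => BT.nstrat (min ε 1 / 4) (C + δ), ?_, ?_⟩
      · intro C hC
        exact BT.nstrat_legal _ _ (BT.lpos hε) (BT.llt1 hε)
          (by linarith [γ.supp_pos C hC])
      · intro F hF
        refine le_trans (BT.exp_le β γ _ (1/2 + ε) ?_) (le_of_eq (by norm_num))
        intro B hB C hC
        exact BT.payoff_le ε B (C + δ) hε (β.supp_pos B hB)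
          (by linarith [γ.supp_pos C hC]) (F B) (hF B hB) v0
    · intro G hG
      refine ⟨fun B => BT.mstrat (min ε 1 / 4) (B + δ), ?_, ?_⟩
      · intro B hB
        exact BT.mstrat_legal _ _ (BT.lpos hε) (BT.llt1 hε)
          (by linarith [β.supp_pos B hB])
      · refine le_trans (le_of_eq (by norm_num)) (BT.exp_ge β γ _ (1/2 - ε) ?_)
        intro B hB C hC
        exact BT.payoff_ge ε (B + δ) C hε (by linarith [β.supp_pos B hB])
          (γ.supp_pos C hC) (G C) (hG C hC) v0

end
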